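/- Let β ∈ (0,1), m ∈ (0,1/2), b > 0 be real and define W : ℝ → ℝ by W(s) := −(1/2 + s)·(1 − β·(1/2 + m) − b·β·(m + s))/(1 − (1/2 − s)·β). Then W is differentiable at s = −m with W′(−m) = −1 + β·(b + 1)·(1/2 − m)/(1 − β·(1/2 + m)); consequently W′(−m) ≤ 0 if and only if b ≤ (1 − β)/(β·(1/2 − m)). -/

import Mathlib

/-- Derivative of the principal's stationary value at s = −m (θ = 0, no commitment),
    and the cutoff b̂ for its sign. -/
theorem stmt_17 (β m b : ℝ) (hβ0 : 0 < β) (hβ1 : β < 1)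
    (hm0 : 0 < m) (hm1 : m < 1/2) (hb : 0 < b)
    (W : ℝ → ℝ)
    (hW : W = fun s => -(1/2 + s) * (1 - β * (1/2 + m) - b * β * (m + s))
      / (1 - (1/2 - s) * β)) :
    HasDerivAt W (-1 + β * (b + 1) * (1/2 - m) / (1 - β * (1/2 + m))) (-m) ∧
    (-1 + β * (b + 1) * (1/2 - m) / (1 - β * (1/2 + m)) ≤ 0
      ↔ b ≤ (1 - β) / (β * (1/2 - m))) := by
  have hK : 0 < 1 - β * (1/2 + m) := by nlinarith
  have hK' : (1 - β * (1/2 + m)) ≠ 0 := ne_of_gt hK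
  constructor
  · subst hW
    have hnum : HasDerivAt (fun s : ℝ => -(1/2 + s) * (1 - β * (1/2 + m) - b * β * (m + s)))
        (-(1 - β * (1/2 + m) - b * β * (m + (-m))) + -(1/2 + (-m)) * (-(b * β))) (-m) := by
      have h1 : HasDerivAt (fun s : ℝ => -(1/2 + s)) (-1) (-m) :=
        ((hasDerivAt_id (-m)).const_add (1/2)).neg
      have h2 : HasDerivAt (fun s : ℝ => 1 - β * (1/2 + m) - b * β * (m + s))
          (-(b * β)) (-m) := by
        have := (((hasDerivAt_id (-m)).const_add m).const_mul (b * β)).const_sub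
          (1 - β * (1/2 + m))
        simpa using this
      exact (h1.mul h2).congr_deriv (by ring)
    have hden : HasDerivAt (fun s : ℝ => 1 - (1/2 - s) * β) β (-m) := by
      have heq : (fun s : ℝ => 1 - (1/2 - s) * β) = fun s : ℝ => 1 - β/2 + s * β := by
        funext s; ring
      rw [heq]
      simpa using ((hasDerivAt_id (-m)).mul_const β).const_add (1 - β/2)
    have hden0 : 1 - (1/2 - (-m)) * β ≠ 0 := by
      have : 1 - (1/2 - (-m)) * β = 1 - β * (1/2 + m) := by ring
      rw [this]; exact hK'
    have := hnum.div hden hden0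
    refine this.congr_deriv ?_
    symm
    have e : 1 - (1/2 - (-m)) * β = 1 - β * (1/2 + m) := by ring
    rw [e]
    rw [show ((-(1 - β * (1/2 + m) - b * β * (m + -m)) + -(1/2 + -m) * -(b * β)) * (1 - β * (1/2 + m)) -
        -(1/2 + -m) * (1 - β * (1/2 + m) - b * β * (m + -m)) * β)
      = (1 - β * (1/2 + m)) * (-(1 - β * (1/2 + m)) + β * (b + 1) * (1/2 - m)) from by ring,
      pow_two, mul_div_mul_left _ _ hK', add_div, neg_div, div_self hK']
  · have hc : 0 < β * (1/2 - m) := by nlinarith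
    rw [show (-1 + β * (b + 1) * (1/2 - m) / (1 - β * (1/2 + m)) ≤ 0)
        ↔ β * (b + 1) * (1/2 - m) / (1 - β * (1/2 + m)) ≤ 1 from by
      constructor <;> intro h <;> linarith]
    rw [div_le_one hK, le_div_iff₀ hc]
    constructor <;> intro h <;> nlinarith
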